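/- Let k ∈ ℕ and let σ be a function assigning to each n ∈ ℕ a set σ(n) of functions from I_n to {0,1} with |σ(n)| ≤ 2^{kn}. Then the set B = {x ∈ 2^ω : for all n, h_x(n) ∈ σ(n)} is a μ-null set, where μ is the uniform product probability measure on 2^ω (each coordinate an independent fair coin). -/

import Mathlib

open MeasureTheory


/-- The interval `I_n = [2^n − 1, 2^{n+1} − 1)` of the partition of `ℕ` has exactly
`2^n` elements; we identify the restriction `h_x(n) = x↾I_n` of `x ∈ 2^ω` to `I_n`
with the function `Fin (2^n) → Bool`, `i ↦ x (2^n − 1 + i)`. -/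
def hRes (x : ℕ → Bool) (n : ℕ) : Fin (2 ^ n) → Bool :=
  fun i => x (2 ^ n - 1 + (i : ℕ))

/-- The slalom set `B = {x ∈ 2^ω : ∀ n, h_x(n) ∈ σ(n)}`. -/
def slalomSet (σ : (n : ℕ) → Finset (Fin (2 ^ n) → Bool)) : Set (ℕ → Bool) :=
  { x | ∀ n : ℕ, hRes x n ∈ σ n }

/- Auxiliary material. -/

lemma block_index_lt {N n i : ℕ} (hn : n < N) (hi : i < 2 ^ n) :
    2 ^ n - 1 + i < 2 ^ N - 1 := by
  have h2 : 2 ^ (n + 1) ≤ 2 ^ N := Nat.pow_le_pow_right (by norm_num) hn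
  have h3 : 1 ≤ 2 ^ n := Nat.one_le_two_pow
  have h4 : 2 ^ (n + 1) = 2 ^ n + 2 ^ n := by ring
  omega

/-- Restriction of a finite sequence of length `2^N - 1` to the `n`-th block. -/
def blockRes {N : ℕ} (v : Fin (2 ^ N - 1) → Bool) (n : ℕ) (hn : n < N) :
    Fin (2 ^ n) → Bool :=
  fun i => v ⟨2 ^ n - 1 + (i : ℕ), block_index_lt hn i.isLt⟩

lemma blockRes_eq_hRes {N : ℕ} (x : ℕ → Bool) (n : ℕ) (hn : n < N) :
    blockRes (fun j : Fin (2 ^ N - 1) => x j) n hn = hRes x n := rfl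

lemma blockRes_inj {N : ℕ} (v w : Fin (2 ^ N - 1) → Bool)
    (h : ∀ n : ℕ, ∀ hn : n < N, blockRes v n hn = blockRes w n hn) : v = w := by
  funext j
  set n := Nat.log 2 ((j : ℕ) + 1) with hn
  have hj1 : (j : ℕ) + 1 ≠ 0 := by omega
  have hlow : 2 ^ n ≤ (j : ℕ) + 1 := Nat.pow_log_le_self 2 hj1
  have hhigh : (j : ℕ) + 1 < 2 ^ (n + 1) := Nat.lt_pow_succ_log_self (by norm_num) _
  have hjL : (j : ℕ) < 2 ^ N - 1 := j.isLt
  have h1 : 1 ≤ 2 ^ N := Nat.one_le_two_pow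
  have hnN : n < N := by
    by_contra hc
    have : 2 ^ N ≤ 2 ^ n := Nat.pow_le_pow_right (by norm_num) (by omega)
    omega
  set i : ℕ := (j : ℕ) + 1 - 2 ^ n with hi
  have h4 : 2 ^ (n + 1) = 2 ^ n + 2 ^ n := by ring
  have hiLt : i < 2 ^ n := by omega
  have := congrFun (h n hnN) ⟨i, hiLt⟩
  simpa only [blockRes] using by
    have hje : j = (⟨2 ^ n - 1 + i, block_index_lt hnN hiLt⟩ : Fin (2 ^ N - 1)) := by
      apply Fin.ext
      simp only []
      have h3 : 1 ≤ 2 ^ n := Nat.one_le_two_pow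
      omega
    rw [hje]
    exact this

lemma cube_le_two_pow {N : ℕ} (h : 10 ≤ N) : N ^ 3 ≤ 2 ^ N := by
  induction N, h using Nat.le_induction with
  | base => norm_num
  | succ n hn ih =>
    have h2 : (n + 1) ^ 3 ≤ 2 * n ^ 3 := by
      have h3 : 10 * n ^ 2 ≤ n * n ^ 2 := Nat.mul_le_mul_right _ hn
      nlinarith [hn, h3]
    calc (n + 1) ^ 3 ≤ 2 * n ^ 3 := h2
      _ ≤ 2 * 2 ^ n := by omega
      _ = 2 ^ (n + 1) := by ring


lemma exists_good_N (k M : ℕ) : ∃ N : ℕ, k * N ^ 2 + M + 1 ≤ 2 ^ N := by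
  refine ⟨max 10 (k + M + 2), ?_⟩
  set N := max 10 (k + M + 2) with hN
  have h10 : 10 ≤ N := le_max_left _ _
  have hk : k + M + 2 ≤ N := le_max_right _ _
  calc k * N ^ 2 + M + 1 ≤ k * N ^ 2 + N := by omega
    _ ≤ k * N ^ 2 + N ^ 2 := by nlinarith
    _ = (k + 1) * N ^ 2 := by ring
    _ ≤ N * N ^ 2 := by
        have : k + 1 ≤ N := by omega
        exact Nat.mul_le_mul_right _ this
    _ = N ^ 3 := by ring
    _ ≤ 2 ^ N := cube_le_two_pow h10

/-- If `μ` is the uniform product probability measure on `2^ω` (the unique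
probability measure giving each basic cylinder `[s]` measure `2^{-|s|}`), and
`σ(n)` is a set of at most `2^{kn}` functions `I_n → 2` for each `n`, then the
slalom set `B = {x : ∀ n, h_x(n) ∈ σ(n)}` is `μ`-null. -/
theorem slalomSet_null (μ : MeasureTheory.Measure (ℕ → Bool))
    (hprob : MeasureTheory.IsProbabilityMeasure μ)
    (hcyl : ∀ s : List Bool,
      μ { x : ℕ → Bool | ∀ i : Fin s.length, x i = s.get i } =
        (1 / 2 : ENNReal) ^ s.length)
    (k : ℕ) (σ : (n : ℕ) → Finset (Fin (2 ^ n) → Bool))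
    (hσ : ∀ n : ℕ, (σ n).card ≤ 2 ^ (k * n)) :
    μ (slalomSet σ) = 0 := by
  -- the measure of each full cylinder of length L
  have hCv : ∀ (L : ℕ) (v : Fin L → Bool),
      μ { x : ℕ → Bool | ∀ i : Fin L, x i = v i } = (1 / 2 : ENNReal) ^ L := by
    intro L v
    have h := hcyl (List.ofFn v)
    have hset : { x : ℕ → Bool | ∀ i : Fin (List.ofFn v).length,
        x i = (List.ofFn v).get i } = { x : ℕ → Bool | ∀ i : Fin L, x i = v i } := by
      ext x
      simp only [Set.mem_setOf_eq, Fin.forall_iff, List.length_ofFn, List.get_ofFn,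
        Fin.cast]
    rw [hset, List.length_ofFn] at h
    exact h
  have key : ∀ M : ℕ, μ (slalomSet σ) ≤ (1 / 2 : ENNReal) ^ M := by
    intro M
    obtain ⟨N, hN⟩ := exists_good_N k M
    set L := 2 ^ N - 1 with hL
    -- admissible initial segments
    set T : Finset (Fin L → Bool) :=
      Finset.univ.filter (fun v => ∀ n : Fin N, blockRes v n n.isLt ∈ σ n) with hT
    -- covering
    have hcover : slalomSet σ ⊆ ⋃ v ∈ T, { x : ℕ → Bool | ∀ i : Fin L, x i = v i } := by
      intro x hx
      have hvT : (fun j : Fin L => x j) ∈ T := by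
        rw [hT, Finset.mem_filter]
        refine ⟨Finset.mem_univ _, fun n => ?_⟩
        rw [blockRes_eq_hRes]
        exact hx n
      exact Set.mem_biUnion hvT (fun i => rfl)
    -- counting
    have hcard : (T.card : ℕ) ≤ 2 ^ (k * ∑ n ∈ Finset.range N, n) := by
      have hinj : Set.InjOn (fun v : Fin L → Bool => fun n : Fin N =>
          blockRes v n n.isLt) T := by
        intro v _ w _ h
        apply blockRes_inj
        intro n hn
        exact congrFun h ⟨n, hn⟩
      have hmaps : ∀ v ∈ T, (fun n : Fin N => blockRes v n n.isLt) ∈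
          Fintype.piFinset (fun n : Fin N => σ n) := by
        intro v hv
        rw [Fintype.mem_piFinset]
        intro n
        rw [hT, Finset.mem_filter] at hv
        exact hv.2 n
      have := Finset.card_le_card_of_injOn _ hmaps hinj
      calc T.card ≤ (Fintype.piFinset (fun n : Fin N => σ n)).card := this
        _ = ∏ n : Fin N, (σ n).card := Fintype.card_piFinset _
        _ ≤ ∏ n : Fin N, 2 ^ (k * (n : ℕ)) := Finset.prod_le_prod' (fun n _ => hσ n)
        _ = 2 ^ (∑ n : Fin N, k * (n : ℕ)) := Finset.prod_pow_eq_pow_sum ..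
        _ = 2 ^ (k * ∑ n : Fin N, (n : ℕ)) := by rw [← Finset.mul_sum]
        _ = 2 ^ (k * ∑ n ∈ Finset.range N, n) := by
            rw [Finset.sum_range fun n => n]
    set S := ∑ n ∈ Finset.range N, n with hS
    have hSN : S ≤ N ^ 2 := by
      calc S ≤ ∑ _n ∈ Finset.range N, N :=
            Finset.sum_le_sum (fun n hn => le_of_lt (Finset.mem_range.mp hn))
        _ = N * N := by rw [Finset.sum_const, Finset.card_range]; ring
        _ = N ^ 2 := by ring
    have hLS : k * S + M ≤ L := by
      have : k * S ≤ k * N ^ 2 := Nat.mul_le_mul_left k hSN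
      have h1 : 1 ≤ 2 ^ N := Nat.one_le_two_pow
      omega
    -- measure bound
    calc μ (slalomSet σ)
        ≤ μ (⋃ v ∈ T, { x : ℕ → Bool | ∀ i : Fin L, x i = v i }) := measure_mono hcover
      _ ≤ ∑ v ∈ T, μ { x : ℕ → Bool | ∀ i : Fin L, x i = v i } :=
          measure_biUnion_finset_le T _
      _ = ∑ _v ∈ T, (1 / 2 : ENNReal) ^ L := by
          apply Finset.sum_congr rfl
          intro v _
          exact hCv L v
      _ = (T.card : ENNReal) * (1 / 2 : ENNReal) ^ L := by
          rw [Finset.sum_const, nsmul_eq_mul]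
      _ ≤ (2 : ENNReal) ^ (k * S) * (1 / 2 : ENNReal) ^ L := by
          apply mul_le_mul_left
          calc (T.card : ENNReal) ≤ ((2 ^ (k * S) : ℕ) : ENNReal) := by
                exact_mod_cast hcard
            _ = (2 : ENNReal) ^ (k * S) := by push_cast; ring
      _ ≤ (1 / 2 : ENNReal) ^ M := by
          have hLe : L = k * S + (L - k * S) := by omega
          rw [hLe, pow_add, ← mul_assoc, ← mul_pow]
          have h2 : (2 : ENNReal) * (1 / 2) = 1 := by
            rw [one_div, ENNReal.mul_inv_cancel] <;> norm_num
          rw [h2, one_pow, one_mul]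
          apply pow_le_pow_of_le_one (by norm_num) (by norm_num)
          omega
  have htend : Filter.Tendsto (fun M : ℕ => (1 / 2 : ENNReal) ^ M)
      Filter.atTop (nhds 0) :=
    ENNReal.tendsto_pow_atTop_nhds_zero_of_lt_one (by norm_num)
  have : μ (slalomSet σ) ≤ 0 := ge_of_tendsto' htend key
  exact le_antisymm this zero_le
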